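/- Suppose A = (A_1, …, A_e) is a tuple of d×d matrices over k with A_e equal to the identity matrix I_d. Then for every 1 ≤ j ≤ e−1, κ_j(A_1, …, A_e) = d·C(e−1, j) + rank( ψ_j(A_1, …, A_{e−1}) ∘ ψ_{j−1}(A_1, …, A_{e−1}) ), where the composition is taken after identifying all the spaces k^d ⊗ Λ^m(k^{e−1}) with coordinate spaces via the standard bases. -/

import Mathlib

open Matrix

/-- The matrix of the map `ψ_j(A) : k^d ⊗ Λ^j(k^e) → k^d ⊗ Λ^{j+1}(k^e)` determined by
`ψ_j(A)(u ⊗ E) = Σ_i (A_i u) ⊗ (E ∧ e_i)`, written in the standard bases: basis vectors of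
`k^d ⊗ Λ^j(k^e)` are indexed by pairs `(p, S)` with `p : Fin d` and `S` a `j`-element subset
of `Fin e`, and `e_S ∧ e_i = (-1)^{#{s ∈ S | i < s}} e_{insert i S}` if `i ∉ S`, else `0`. -/
noncomputable def psiMatrix {R : Type*} [CommRing R] (d e : ℕ)
    (A : Fin e → Matrix (Fin d) (Fin d) R) (j : ℕ) :
    Matrix (Fin d × {T : Finset (Fin e) // T.card = j + 1})
      (Fin d × {S : Finset (Fin e) // S.card = j}) R :=
  Matrix.of fun qT pS =>
    ∑ i : Fin e,
      if i ∉ pS.2.1 ∧ qT.2.1 = insert i pS.2.1 then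
        (-1 : R) ^ (pS.2.1.filter (fun s => i < s)).card * A i qT.1 pS.1
      else 0

/-- `κ_j(A)` is the rank of `ψ_j(A)`. -/
noncomputable def kappa {R : Type*} [CommRing R] (d e : ℕ)
    (A : Fin e → Matrix (Fin d) (Fin d) R) (j : ℕ) : ℕ :=
  (psiMatrix d e A j).rank

namespace KappaAux
open Finset

variable {n : ℕ}

def emb (n : ℕ) : Fin n ↪ Fin (n+1) := ⟨Fin.castSucc, Fin.castSucc_injective n⟩

def up (S : Finset (Fin n)) : Finset (Fin (n+1)) := S.map (emb n)

@[simp] lemma mem_up {i : Fin n} {S : Finset (Fin n)} : i.castSucc ∈ up S ↔ i ∈ S :=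
  Finset.mem_map' _

lemma last_not_mem_up (S : Finset (Fin n)) : Fin.last n ∉ up S := by
  simp only [up, Finset.mem_map, emb, Function.Embedding.coeFn_mk]
  rintro ⟨x, -, hx⟩
  exact absurd hx (Fin.castSucc_lt_last x).ne

@[simp] lemma card_up (S : Finset (Fin n)) : (up S).card = S.card := Finset.card_map _

lemma up_injective : Function.Injective (up (n := n)) := Finset.map_injective _

lemma up_insert (i : Fin n) (S : Finset (Fin n)) :
    up (insert i S) = insert i.castSucc (up S) := Finset.map_insert _ _ _

noncomputable def down (T : Finset (Fin (n+1))) : Finset (Fin n) :=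
  T.preimage Fin.castSucc ((Fin.castSucc_injective n).injOn)

@[simp] lemma mem_down {i : Fin n} {T : Finset (Fin (n+1))} :
    i ∈ down T ↔ i.castSucc ∈ T := Finset.mem_preimage

lemma up_down {T : Finset (Fin (n+1))} (h : Fin.last n ∉ T) : up (down T) = T := by
  ext x
  rcases Fin.eq_castSucc_or_eq_last x with ⟨j, rfl⟩ | rfl
  · simp
  · simp [last_not_mem_up, h]

@[simp] lemma down_up (S : Finset (Fin n)) : down (up S) = S := by
  ext i; simp

lemma card_down {T : Finset (Fin (n+1))} (h : Fin.last n ∉ T) : (down T).card = T.card := by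
  rw [← card_up (down T), up_down h]

noncomputable def splitEquiv (n m : ℕ) :
    {T : Finset (Fin (n+1)) // T.card = m + 1} ≃
      ({S : Finset (Fin n) // S.card = m + 1} ⊕ {S : Finset (Fin n) // S.card = m}) where
  toFun T :=
    if h : Fin.last n ∈ T.1 then
      Sum.inr ⟨down (T.1.erase (Fin.last n)), by
        rw [card_down (Finset.notMem_erase _ _), Finset.card_erase_of_mem h, T.2]; rfl⟩
    else Sum.inl ⟨down T.1, by rw [card_down h, T.2]⟩
  invFun := Sum.elim
    (fun S => ⟨up S.1, by rw [card_up, S.2]⟩)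
    (fun S => ⟨insert (Fin.last n) (up S.1), by
      rw [Finset.card_insert_of_notMem (last_not_mem_up _), card_up, S.2]⟩)
  left_inv T := by
    by_cases h : Fin.last n ∈ T.1
    · simp only [h, dif_pos, Sum.elim_inr]
      refine Subtype.ext ?_
      show insert (Fin.last n) (up (down ((T.1).erase (Fin.last n)))) = T.1
      rw [up_down (Finset.notMem_erase _ _), Finset.insert_erase h]
    · simp only [h, dif_neg, not_false_iff, Sum.elim_inl]
      exact Subtype.ext (up_down h)
  right_inv S := by
    rcases S with S | S
    · simp only [Sum.elim_inl]
      refine (dif_neg (last_not_mem_up S.1)).trans ?_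
      simp
    · simp only [Sum.elim_inr]
      refine (dif_pos (Finset.mem_insert_self (Fin.last n) (up S.1))).trans ?_
      simp only [Sum.inr.injEq]
      refine Subtype.ext ?_
      show down ((insert (Fin.last n) (up S.1)).erase (Fin.last n)) = S.1
      rw [Finset.erase_insert (last_not_mem_up S.1), down_up]


lemma filter_up_card (i : Fin n) (S : Finset (Fin n)) :
    ((up S).filter (fun s => i.castSucc < s)).card = (S.filter (fun s => i < s)).card := by
  rw [up, Finset.filter_map, Finset.card_map]
  congr 1

lemma filter_insert_last_card (i : Fin n) (S : Finset (Fin n)) :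
    ((insert (Fin.last n) (up S)).filter (fun s => i.castSucc < s)).card
      = (S.filter (fun s => i < s)).card + 1 := by
  rw [Finset.filter_insert, if_pos (Fin.castSucc_lt_last i),
      Finset.card_insert_of_notMem (fun h => last_not_mem_up S (Finset.mem_filter.1 h).1),
      filter_up_card]

lemma filter_last_eq_empty (S : Finset (Fin (n+1))) :
    (S.filter (fun s => Fin.last n < s)) = ∅ :=
  Finset.filter_false_of_mem (fun s _ => not_lt.mpr (Fin.le_last s))

lemma insert_last_inj {T S : Finset (Fin (n+1))} (hT : Fin.last n ∉ T) (hS : Fin.last n ∉ S) :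
    insert (Fin.last n) T = insert (Fin.last n) S ↔ T = S := by
  constructor
  · intro h
    have := congrArg (fun X => Finset.erase X (Fin.last n)) h
    simpa [Finset.erase_insert hT, Finset.erase_insert hS] using this
  · intro h; rw [h]

noncomputable def idxEquiv (d n m : ℕ) :
    ((Fin d × {S : Finset (Fin n) // S.card = m+1}) ⊕ (Fin d × {S : Finset (Fin n) // S.card = m}))
      ≃ (Fin d × {T : Finset (Fin (n+1)) // T.card = m+1}) :=
  (Equiv.prodSumDistrib (Fin d) _ _).symm.trans
    ((Equiv.refl (Fin d)).prodCongr (splitEquiv n m).symm)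

lemma idxEquiv_inl (d n m : ℕ) (p : Fin d) (S : {S : Finset (Fin n) // S.card = m+1}) :
    idxEquiv d n m (Sum.inl (p, S)) = (p, ⟨up S.1, by rw [card_up, S.2]⟩) := rfl

lemma idxEquiv_inr (d n m : ℕ) (p : Fin d) (S : {S : Finset (Fin n) // S.card = m}) :
    idxEquiv d n m (Sum.inr (p, S)) = (p, ⟨insert (Fin.last n) (up S.1), by
      rw [Finset.card_insert_of_notMem (last_not_mem_up _), card_up, S.2]⟩) := rfl

lemma psi_submatrix {R : Type*} [CommRing R] (d n : ℕ)
    (A : Fin (n+1) → Matrix (Fin d) (Fin d) R) (hA : A (Fin.last n) = 1) (m : ℕ) :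
    (psiMatrix d (n+1) A (m+1)).submatrix (idxEquiv d n (m+1)) (idxEquiv d n m) =
      Matrix.fromBlocks (psiMatrix d n (fun i => A i.castSucc) (m+1)) 0
        1 (-(psiMatrix d n (fun i => A i.castSucc) m)) := by
  classical
  ext rc cc
  obtain ⟨q, T⟩ | ⟨q, T⟩ := rc <;> obtain ⟨p, S⟩ | ⟨p, S⟩ := cc
  · -- block 11
    rw [Matrix.submatrix_apply, idxEquiv_inl, idxEquiv_inl, Matrix.fromBlocks_apply₁₁]
    show (∑ i : Fin (n+1), if i ∉ up S.1 ∧ up T.1 = insert i (up S.1) then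
        (-1 : R) ^ ((up S.1).filter (fun s => i < s)).card * A i q p else 0) = _
    rw [Fin.sum_univ_castSucc]
    have hlast : ¬(Fin.last n ∉ up S.1 ∧ up T.1 = insert (Fin.last n) (up S.1)) := by
      rintro ⟨-, h⟩
      exact last_not_mem_up T.1 (h ▸ Finset.mem_insert_self _ _)
    rw [if_neg hlast, add_zero]
    refine Finset.sum_congr rfl fun i _ => ?_
    rw [filter_up_card]
    refine if_congr (and_congr (not_congr mem_up) ?_) rfl rfl
    rw [← up_insert]
    exact up_injective.eq_iff
  · -- block 12
    rw [Matrix.submatrix_apply, idxEquiv_inl, idxEquiv_inr, Matrix.fromBlocks_apply₁₂,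
      Matrix.zero_apply]
    show (∑ i : Fin (n+1), if i ∉ insert (Fin.last n) (up S.1) ∧
        up T.1 = insert i (insert (Fin.last n) (up S.1)) then
        (-1 : R) ^ ((insert (Fin.last n) (up S.1)).filter (fun s => i < s)).card * A i q p
        else 0) = 0
    refine Finset.sum_eq_zero fun i _ => ?_
    rcases Fin.eq_castSucc_or_eq_last i with ⟨j, rfl⟩ | rfl
    · refine if_neg ?_
      rintro ⟨-, h⟩
      exact last_not_mem_up T.1
        (h ▸ Finset.mem_insert_of_mem (Finset.mem_insert_self _ _))
    · exact if_neg fun h => h.1 (Finset.mem_insert_self _ _)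
  · -- block 21
    rw [Matrix.submatrix_apply, idxEquiv_inr, idxEquiv_inl, Matrix.fromBlocks_apply₂₁]
    show (∑ i : Fin (n+1), if i ∉ up S.1 ∧ insert (Fin.last n) (up T.1) = insert i (up S.1) then
        (-1 : R) ^ ((up S.1).filter (fun s => i < s)).card * A i q p else 0) = _
    rw [Fin.sum_univ_castSucc]
    have hz : ∀ i : Fin n, (if i.castSucc ∉ up S.1 ∧
        insert (Fin.last n) (up T.1) = insert i.castSucc (up S.1) then
        (-1 : R) ^ ((up S.1).filter (fun s => i.castSucc < s)).card * A i.castSucc q p else 0)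
        = 0 := by
      intro i
      refine if_neg fun h => ?_
      have hmem := h.2 ▸ Finset.mem_insert_self (Fin.last n) (up T.1)
      rcases Finset.mem_insert.1 hmem with h' | h'
      · exact (Fin.castSucc_lt_last i).ne h'.symm
      · exact last_not_mem_up _ h'
    rw [Finset.sum_congr rfl fun i _ => hz i, Finset.sum_const_zero, zero_add]
    rw [if_congr (and_congr_right fun _ => (insert_last_inj (last_not_mem_up T.1)
        (last_not_mem_up S.1)).trans up_injective.eq_iff) rfl rfl]
    rw [filter_last_eq_empty, Finset.card_empty, pow_zero, one_mul, hA]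
    by_cases hTS : T = S
    · subst hTS
      simp [Matrix.one_apply, Prod.ext_iff, last_not_mem_up]
    · rw [if_neg (fun h => hTS (Subtype.ext h.2)),
        Matrix.one_apply_ne (fun h => hTS (congrArg Prod.snd h))]
  · -- block 22
    rw [Matrix.submatrix_apply, idxEquiv_inr, idxEquiv_inr, Matrix.fromBlocks_apply₂₂,
      Matrix.neg_apply]
    show (∑ i : Fin (n+1), if i ∉ insert (Fin.last n) (up S.1) ∧
        insert (Fin.last n) (up T.1) = insert i (insert (Fin.last n) (up S.1)) then
        (-1 : R) ^ (((insert (Fin.last n) (up S.1))).filter (fun s => i < s)).card * A i q p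
        else 0) = _
    rw [Fin.sum_univ_castSucc, if_neg (fun h => h.1 (Finset.mem_insert_self _ _)), add_zero]
    rw [show psiMatrix d n (fun i => A i.castSucc) m (q, T) (p, S) =
      ∑ i : Fin n, (if i ∉ S.1 ∧ T.1 = insert i S.1 then
        (-1 : R) ^ (S.1.filter (fun s => i < s)).card * A i.castSucc q p else 0) from rfl,
      ← Finset.sum_neg_distrib]
    refine Finset.sum_congr rfl fun i _ => ?_
    rw [filter_insert_last_card, pow_succ]
    have hc2 : (insert (Fin.last n) (up T.1) = insert i.castSucc (insert (Fin.last n) (up S.1)))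
        ↔ T.1 = insert i S.1 := by
      rw [Finset.insert_comm,
        insert_last_inj (last_not_mem_up T.1) (fun h => by
          rcases Finset.mem_insert.1 h with h' | h'
          · exact (Fin.castSucc_lt_last i).ne h'.symm
          · exact last_not_mem_up _ h'),
        ← up_insert]
      exact up_injective.eq_iff
    have hc1 : (i.castSucc ∉ insert (Fin.last n) (up S.1)) ↔ i ∉ S.1 := by
      rw [Finset.mem_insert]
      simp [(Fin.castSucc_lt_last i).ne]
    rw [if_congr (and_congr hc1 hc2) rfl rfl, apply_ite (fun x : R => -x), neg_zero]
    split_ifs <;> ring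

end KappaAux

section RankLemmas

variable {R : Type*} [CommRing R]

lemma rank_reindex' {m n l o : Type*} [Fintype n] [Fintype m] [Fintype o]
    (A : Matrix m n R) (e₁ : m ≃ l) (e₂ : n ≃ o) :
    (Matrix.reindex e₁ e₂ A).rank = A.rank := by
  rw [Matrix.rank, Matrix.rank, Matrix.mulVecLin_reindex, LinearMap.range_comp,
    LinearMap.range_comp, LinearEquiv.range, Submodule.map_top, LinearEquiv.finrank_map_eq]

lemma rank_submatrix' {m n l o : Type*} [Fintype n] [Fintype m] [Fintype o]
    (A : Matrix m n R) (e₁ : l ≃ m) (e₂ : o ≃ n) :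
    (A.submatrix e₁ e₂).rank = A.rank := by
  simpa only [Matrix.reindex_apply, Equiv.symm_symm] using rank_reindex' A e₁.symm e₂.symm

end RankLemmas

section FieldRank

variable {k : Type*} [Field k]

set_option maxHeartbeats 1000000 in
lemma finrank_submodule_prod {M N : Type*} [AddCommGroup M] [AddCommGroup N]
    [Module k M] [Module k N] [FiniteDimensional k M] [FiniteDimensional k N]
    (p : Submodule k M) (q : Submodule k N) :
    Module.finrank k (p.prod q) = Module.finrank k p + Module.finrank k q := by
  rw [LinearMap.prod_eq_sup_map]
  have hle1 : p.map (LinearMap.inl k M N) ≤ LinearMap.range (LinearMap.inl k M N) := by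
    rw [← Submodule.map_top]; exact Submodule.map_mono le_top
  have hle2 : q.map (LinearMap.inr k M N) ≤ LinearMap.range (LinearMap.inr k M N) := by
    rw [← Submodule.map_top]; exact Submodule.map_mono le_top
  have hdisj : Disjoint (p.map (LinearMap.inl k M N)) (q.map (LinearMap.inr k M N)) :=
    LinearMap.disjoint_inl_inr.mono hle1 hle2
  have hkey := Submodule.finrank_sup_add_finrank_inf_eq
    (p.map (LinearMap.inl k M N)) (q.map (LinearMap.inr k M N))
  rw [hdisj.eq_bot] at hkey
  rw [show Module.finrank k (⊥ : Submodule k (M × N)) = 0 from finrank_bot k (M × N),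
    add_zero] at hkey
  rw [hkey,
    ← LinearEquiv.finrank_eq (Submodule.equivMapOfInjective (LinearMap.inl k M N) LinearMap.inl_injective p),
    ← LinearEquiv.finrank_eq (Submodule.equivMapOfInjective (LinearMap.inr k M N) LinearMap.inr_injective q)]

lemma rank_fromBlocks_diag {a b c e : Type*} [Fintype a] [Fintype b] [Fintype c] [Fintype e]
    (A : Matrix a b k) (D : Matrix c e k) :
    (Matrix.fromBlocks A 0 0 D).rank = A.rank + D.rank := by
  have hdecomp : (Matrix.fromBlocks A 0 0 D).mulVecLin =
      ((LinearEquiv.sumArrowLequivProdArrow a c k k).symm.toLinearMap.comp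
        ((A.mulVecLin).prodMap (D.mulVecLin))).comp
        (LinearEquiv.sumArrowLequivProdArrow b e k k).toLinearMap := by
    refine LinearMap.ext fun v => funext fun x => ?_
    cases x <;>
      simp [Matrix.fromBlocks_mulVec, LinearEquiv.sumArrowLequivProdArrow,
        Equiv.sumArrowEquivProdArrow, Matrix.mulVecLin_apply]
  rw [Matrix.rank, hdecomp, LinearMap.range_comp, LinearEquiv.range, Submodule.map_top,
    LinearMap.range_comp]
  have hrange : LinearMap.range ((A.mulVecLin).prodMap (D.mulVecLin)) =
      (LinearMap.range A.mulVecLin).prod (LinearMap.range D.mulVecLin) := by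
    ext x
    simp only [LinearMap.mem_range, LinearMap.prodMap_apply, Submodule.mem_prod, Prod.ext_iff]
    constructor
    · rintro ⟨v, hv1, hv2⟩
      exact ⟨⟨v.1, hv1⟩, ⟨v.2, hv2⟩⟩
    · rintro ⟨⟨v1, hv1⟩, ⟨v2, hv2⟩⟩
      exact ⟨(v1, v2), hv1, hv2⟩
  rw [hrange, LinearEquiv.finrank_map_eq, finrank_submodule_prod, Matrix.rank, Matrix.rank]

end FieldRank

section Field2
variable {k : Type*} [Field k]

lemma rank_fromBlocks_one {a b c : Type*} [Fintype a] [Fintype b] [Fintype c]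
    [DecidableEq a] [DecidableEq b] [DecidableEq c]
    (X : Matrix a b k) (Y : Matrix b c k) :
    (Matrix.fromBlocks X 0 1 Y).rank = Fintype.card b + (X * Y).rank := by
  have h1 : IsUnit (Matrix.fromBlocks (1 : Matrix a a k) (-X) 0 (1 : Matrix b b k)).det := by
    rw [Matrix.det_fromBlocks_zero₂₁, Matrix.det_one, Matrix.det_one, one_mul]
    exact isUnit_one
  have h2 : IsUnit (Matrix.fromBlocks (1 : Matrix b b k) (-Y) 0 (1 : Matrix c c k)).det := by
    rw [Matrix.det_fromBlocks_zero₂₁, Matrix.det_one, Matrix.det_one, one_mul]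
    exact isUnit_one
  have e1 : Matrix.fromBlocks (1 : Matrix a a k) (-X) 0 (1 : Matrix b b k) *
      Matrix.fromBlocks X 0 1 Y = Matrix.fromBlocks 0 (-(X * Y)) 1 Y := by
    rw [Matrix.fromBlocks_multiply]
    congr 1 <;> simp [Matrix.neg_mul]
  have e2 : Matrix.fromBlocks (0 : Matrix a b k) (-(X * Y)) 1 Y *
      Matrix.fromBlocks (1 : Matrix b b k) (-Y) 0 (1 : Matrix c c k) =
      Matrix.fromBlocks 0 (-(X * Y)) 1 0 := by
    rw [Matrix.fromBlocks_multiply]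
    congr 1 <;> simp [Matrix.mul_neg]
  have r1 := Matrix.rank_mul_eq_right_of_isUnit_det
    (Matrix.fromBlocks (1 : Matrix a a k) (-X) 0 (1 : Matrix b b k))
    (Matrix.fromBlocks X 0 1 Y) h1
  rw [e1] at r1
  have r2 := Matrix.rank_mul_eq_left_of_isUnit_det
    (Matrix.fromBlocks (1 : Matrix b b k) (-Y) 0 (1 : Matrix c c k))
    (Matrix.fromBlocks (0 : Matrix a b k) (-(X * Y)) 1 Y) h2
  rw [e2] at r2
  have e3 : Matrix.fromBlocks (0 : Matrix a b k) (-(X * Y)) 1 0 =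
      (Matrix.fromBlocks (1 : Matrix b b k) 0 0 (-(X * Y))).submatrix
        (Equiv.sumComm a b) (Equiv.refl (b ⊕ c)) := by
    ext i j
    rcases i with i | i <;> rcases j with j | j <;> rfl
  have hneg : (-(X * Y)).rank = (X * Y).rank := by
    have hm : -(X * Y) = (X * Y) * (-1 : Matrix c c k) := by
      rw [Matrix.mul_neg, Matrix.mul_one]
    have hdet : IsUnit (-1 : Matrix c c k).det := by
      rw [show (-1 : Matrix c c k) = -(1 : Matrix c c k) from rfl, Matrix.det_neg,
        Matrix.det_one, mul_one]
      exact (isUnit_one.neg).pow _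
    rw [hm, Matrix.rank_mul_eq_left_of_isUnit_det _ _ hdet]
  rw [← r1, ← r2, e3, rank_submatrix', rank_fromBlocks_diag, Matrix.rank_one, hneg]

lemma rank_neg' {m n : Type*} [Fintype n] [DecidableEq n] (M : Matrix m n k) :
    (-M).rank = M.rank := by
  have hm : -M = M * (-1 : Matrix n n k) := by rw [Matrix.mul_neg, Matrix.mul_one]
  have hdet : IsUnit (-1 : Matrix n n k).det := by
    rw [show (-1 : Matrix n n k) = -(1 : Matrix n n k) from rfl, Matrix.det_neg,
      Matrix.det_one, mul_one]
    exact (isUnit_one.neg).pow _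
  rw [hm, Matrix.rank_mul_eq_left_of_isUnit_det _ _ hdet]

end Field2

/-- if the last matrix of the tuple is the identity, then for `1 ≤ j ≤ e-1`
(written `j = j'+1`), `κ_j(A) = d·C(e-1,j) + rank(ψ_j(A₁,…,A_{e-1}) ∘ ψ_{j-1}(A₁,…,A_{e-1}))`. -/
theorem kappa_of_last_eq_one {k : Type*} [Field k] (d e : ℕ) (hd : 1 ≤ d) (he : 2 ≤ e)
    (A : Fin e → Matrix (Fin d) (Fin d) k)
    (hA : A ⟨e - 1, by omega⟩ = 1)
    (j : ℕ) (hj : j + 1 ≤ e - 1) :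
    kappa d e A (j + 1) =
      d * Nat.choose (e - 1) (j + 1) +
        (psiMatrix d (e - 1) (fun i => A (Fin.castLE (Nat.sub_le e 1) i)) (j + 1) *
          psiMatrix d (e - 1) (fun i => A (Fin.castLE (Nat.sub_le e 1) i)) j).rank := by
  classical
  obtain ⟨n, rfl⟩ : ∃ n, e = n + 1 := ⟨e - 1, by omega⟩
  have hA' : A (Fin.last n) = 1 := hA
  show kappa d (n+1) A (j+1) = d * Nat.choose n (j+1) +
    (psiMatrix d n (fun i => A i.castSucc) (j+1) *
      psiMatrix d n (fun i => A i.castSucc) j).rank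
  rw [kappa, ← rank_submatrix' (psiMatrix d (n+1) A (j+1))
      (KappaAux.idxEquiv d n (j+1)) (KappaAux.idxEquiv d n j),
    KappaAux.psi_submatrix d n A hA' j, rank_fromBlocks_one, Matrix.mul_neg, rank_neg']
  congr 1
  rw [Fintype.card_prod, Fintype.card_fin, Fintype.card_finset_len, Fintype.card_fin]
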